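/- Let T be a compact subset of {x ∈ ℝⁿ \ {0} : Σ_{i: x_i>0} d_i ≤ δ/2 and Σ_{i: x_i<0} d_i ≤ δ/2} containing π. Let x⁰ ∈ π and define sequences by λᵏ = I(xᵏ)/‖xᵏ‖_{1,d} and xᵏ⁺¹ a minimizer over T of x ↦ I(x) − λᵏ‖x‖_{1,d}. Then the sequence (λᵏ) is nonincreasing and converges to min_{x∈π} I(x), the global minimum of I over π. -/
import Mathlib


open Finset

/-- The degree of vertex `i`, as a real number. -/
noncomputable def dd {n : ℕ} (G : SimpleGraph (Fin n)) [DecidableRel G.Adj] (i : Fin n) : ℝ :=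
  (G.degree i : ℝ)

/-- The weighted 1-norm `‖x‖_{1,d} = Σ_i d_i |x_i|`. -/
noncomputable def norm1d {n : ℕ} (G : SimpleGraph (Fin n)) [DecidableRel G.Adj]
    (x : Fin n → ℝ) : ℝ :=
  ∑ i, dd G i * |x i|

/-- `δ₊(x) = Σ_{i : x_i > 0} d_i`. -/
noncomputable def deltaP {n : ℕ} (G : SimpleGraph (Fin n)) [DecidableRel G.Adj]
    (x : Fin n → ℝ) : ℝ :=
  ∑ i, if 0 < x i then dd G i else 0

/-- `δ₋(x) = Σ_{i : x_i < 0} d_i`. -/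
noncomputable def deltaM {n : ℕ} (G : SimpleGraph (Fin n)) [DecidableRel G.Adj]
    (x : Fin n → ℝ) : ℝ :=
  ∑ i, if x i < 0 then dd G i else 0

/-- `δ₀(x) = Σ_{i : x_i = 0} d_i`. -/
noncomputable def delta0 {n : ℕ} (G : SimpleGraph (Fin n)) [DecidableRel G.Adj]
    (x : Fin n → ℝ) : ℝ :=
  ∑ i, if x i = 0 then dd G i else 0

/-- `δ = Σ_i d_i`. -/
noncomputable def deltaTot {n : ℕ} (G : SimpleGraph (Fin n)) [DecidableRel G.Adj] : ℝ :=
  ∑ i, dd G i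

/-- The set `X = {x : ‖x‖_{1,d} = 1}`. -/
def Xset {n : ℕ} (G : SimpleGraph (Fin n)) [DecidableRel G.Adj] : Set (Fin n → ℝ) :=
  {x | norm1d G x = 1}

/-- The feasible set `π = {x ∈ X : |δ₊(x) − δ₋(x)| ≤ δ₀(x)}`. -/
def piSet {n : ℕ} (G : SimpleGraph (Fin n)) [DecidableRel G.Adj] : Set (Fin n → ℝ) :=
  {x | norm1d G x = 1 ∧ |deltaP G x - deltaM G x| ≤ delta0 G x}

/-- `I(x) = (1/2) Σ_{i,j} a_{ij} |x_i − x_j|`, with `a` the adjacency matrix. -/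
noncomputable def Ifun {n : ℕ} (G : SimpleGraph (Fin n)) [DecidableRel G.Adj]
    (x : Fin n → ℝ) : ℝ :=
  (1 / 2) * ∑ i, ∑ j, (if G.Adj i j then (1 : ℝ) else 0) * |x i - x j|

section Aux

variable {n : ℕ} (G : SimpleGraph (Fin n)) [DecidableRel G.Adj]

lemma dd_nonneg (i : Fin n) : 0 ≤ dd G i := by
  unfold dd; positivity

lemma norm1d_nonneg (x : Fin n → ℝ) : 0 ≤ norm1d G x :=
  Finset.sum_nonneg fun i _ => mul_nonneg (dd_nonneg G i) (abs_nonneg _)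

lemma Ifun_nonneg (x : Fin n → ℝ) : 0 ≤ Ifun G x := by
  unfold Ifun
  apply mul_nonneg (by norm_num)
  refine Finset.sum_nonneg fun i _ => Finset.sum_nonneg fun j _ => ?_
  exact mul_nonneg (by split <;> norm_num) (abs_nonneg _)

lemma norm1d_pos (hd : ∀ i, 0 < dd G i) (x : Fin n → ℝ) (hx : x ≠ 0) :
    0 < norm1d G x := by
  rcases (norm1d_nonneg G x).lt_or_eq with h | h
  · exact h
  · exfalso
    apply hx
    funext i
    have h0 := (Finset.sum_eq_zero_iff_of_nonneg
      (fun i _ => mul_nonneg (dd_nonneg G i) (abs_nonneg (x i)))).mp h.symm i (Finset.mem_univ i)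
    rcases mul_eq_zero.mp h0 with h1 | h1
    · exact absurd h1 (hd i).ne'
    · simpa using abs_eq_zero.mp h1

lemma norm1d_smul (c : ℝ) (hc : 0 ≤ c) (x : Fin n → ℝ) :
    norm1d G (c • x) = c * norm1d G x := by
  unfold norm1d
  rw [Finset.mul_sum]
  refine Finset.sum_congr rfl fun i _ => ?_
  simp only [Pi.smul_apply, smul_eq_mul, abs_mul, abs_of_nonneg hc]
  ring

lemma Ifun_smul (c : ℝ) (hc : 0 ≤ c) (x : Fin n → ℝ) :
    Ifun G (c • x) = c * Ifun G x := by
  unfold Ifun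
  have h : (∑ i, ∑ j, (if G.Adj i j then (1 : ℝ) else 0) * |(c • x) i - (c • x) j|)
      = c * ∑ i, ∑ j, (if G.Adj i j then (1 : ℝ) else 0) * |x i - x j| := by
    rw [Finset.mul_sum]
    refine Finset.sum_congr rfl fun i _ => ?_
    rw [Finset.mul_sum]
    refine Finset.sum_congr rfl fun j _ => ?_
    simp only [Pi.smul_apply, smul_eq_mul, ← mul_sub, abs_mul, abs_of_nonneg hc]
    ring
  rw [h]
  ring

lemma deltaP_smul (c : ℝ) (hc : 0 < c) (x : Fin n → ℝ) :
    deltaP G (c • x) = deltaP G x := by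
  unfold deltaP
  refine Finset.sum_congr rfl fun i _ => ?_
  have : (0 < c * x i) ↔ (0 < x i) := by
    constructor
    · intro h
      by_contra h'
      have := not_lt.mp h'
      nlinarith
    · exact fun h => mul_pos hc h
  simp only [Pi.smul_apply, smul_eq_mul, this]

lemma deltaM_smul (c : ℝ) (hc : 0 < c) (x : Fin n → ℝ) :
    deltaM G (c • x) = deltaM G x := by
  unfold deltaM
  refine Finset.sum_congr rfl fun i _ => ?_
  have : (c * x i < 0) ↔ (x i < 0) := by
    constructor
    · intro h
      by_contra h'
      exact absurd (mul_nonneg hc.le (not_lt.mp h')) (not_le.mpr h)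
    · intro h
      exact mul_neg_of_pos_of_neg hc h
  simp only [Pi.smul_apply, smul_eq_mul, this]

lemma delta0_smul (c : ℝ) (hc : 0 < c) (x : Fin n → ℝ) :
    delta0 G (c • x) = delta0 G x := by
  unfold delta0
  refine Finset.sum_congr rfl fun i _ => ?_
  have : (c * x i = 0) ↔ (x i = 0) := by
    simp [mul_eq_zero, hc.ne']
  simp only [Pi.smul_apply, smul_eq_mul, this]

lemma delta_decomp (x : Fin n → ℝ) :
    deltaP G x + deltaM G x + delta0 G x = deltaTot G := by
  unfold deltaP deltaM delta0 deltaTot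
  rw [← Finset.sum_add_distrib, ← Finset.sum_add_distrib]
  refine Finset.sum_congr rfl fun i _ => ?_
  rcases lt_trichotomy (x i) 0 with h | h | h
  · rw [if_neg (not_lt.mpr h.le), if_pos h, if_neg h.ne]; ring
  · rw [if_neg (by simp [h]), if_neg (by simp [h]), if_pos h]; ring
  · rw [if_pos h, if_neg (not_lt.mpr h.le), if_neg h.ne']; ring

lemma scale_mem_pi (hd : ∀ i, 0 < dd G i) (x : Fin n → ℝ) (hx : x ≠ 0)
    (h1 : deltaP G x ≤ deltaTot G / 2) (h2 : deltaM G x ≤ deltaTot G / 2) :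
    (norm1d G x)⁻¹ • x ∈ piSet G := by
  have hpos := norm1d_pos G hd x hx
  have hcpos : 0 < (norm1d G x)⁻¹ := inv_pos.mpr hpos
  constructor
  · rw [norm1d_smul G _ hcpos.le, inv_mul_cancel₀ hpos.ne']
  · rw [deltaP_smul G _ hcpos, deltaM_smul G _ hcpos, delta0_smul G _ hcpos, abs_le]
    have hdec := delta_decomp G x
    constructor <;> linarith

lemma norm1d_continuous : Continuous (norm1d G) := by
  unfold norm1d
  exact continuous_finset_sum _ fun i _ => continuous_const.mul ((continuous_apply i).abs)

end Aux

/-- Two-step iterative scheme: with `T` a compact subset of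
`{x ≠ 0 : 0 is a median of x}` containing `π`, starting from `x⁰ ∈ π`, setting
`λᵏ = I(xᵏ)/‖xᵏ‖_{1,d}` and choosing `xᵏ⁺¹` minimizing `I(x) − λᵏ‖x‖_{1,d}` over `T`,
the sequence `(λᵏ)` is nonincreasing and converges to the global minimum of `I` over `π`. -/
theorem stmt17 {n : ℕ} (G : SimpleGraph (Fin n)) [DecidableRel G.Adj]
    (hd : ∀ i, 0 < dd G i) (T : Set (Fin n → ℝ)) (hTc : IsCompact T)
    (hπT : piSet G ⊆ T)
    (hT : T ⊆ {x | x ≠ 0 ∧ deltaP G x ≤ deltaTot G / 2 ∧ deltaM G x ≤ deltaTot G / 2})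
    (x : ℕ → Fin n → ℝ) (hx0 : x 0 ∈ piSet G)
    (lam : ℕ → ℝ) (hlam : ∀ k, lam k = Ifun G (x k) / norm1d G (x k))
    (hstep : ∀ k, x (k + 1) ∈ T ∧
      ∀ y ∈ T, Ifun G (x (k + 1)) - lam k * norm1d G (x (k + 1)) ≤
        Ifun G y - lam k * norm1d G y) :
    Antitone lam ∧
    Filter.Tendsto lam Filter.atTop (nhds (sInf (Ifun G '' piSet G))) := by
  have hxT : ∀ k, x k ∈ T := by
    intro k
    cases k with
    | zero => exact hπT hx0
    | succ k => exact (hstep k).1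
  have hxne : ∀ k, x k ≠ 0 := fun k => (hT (hxT k)).1
  have hnpos : ∀ k, 0 < norm1d G (x k) := fun k => norm1d_pos G hd _ (hxne k)
  have hIk : ∀ k, Ifun G (x k) = lam k * norm1d G (x k) := by
    intro k
    rw [hlam k, div_mul_cancel₀ _ (hnpos k).ne']
  have hscaled : ∀ k, (norm1d G (x k))⁻¹ • x k ∈ piSet G := fun k =>
    scale_mem_pi G hd _ (hxne k) (hT (hxT k)).2.1 (hT (hxT k)).2.2
  have hlam_eq : ∀ k, lam k = Ifun G ((norm1d G (x k))⁻¹ • x k) := by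
    intro k
    rw [Ifun_smul G _ (inv_nonneg.mpr (hnpos k).le), hlam k, div_eq_inv_mul]
  set m := sInf (Ifun G '' piSet G) with hm
  have hbdd : BddBelow (Ifun G '' piSet G) := by
    refine ⟨0, ?_⟩
    rintro a ⟨y, _, rfl⟩
    exact Ifun_nonneg G y
  have hne : (Ifun G '' piSet G).Nonempty := ⟨_, ⟨x 0, hx0, rfl⟩⟩
  have hmle : ∀ k, m ≤ lam k := by
    intro k
    rw [hlam_eq k]
    exact csInf_le hbdd ⟨_, hscaled k, rfl⟩
  have hmono : ∀ k, lam (k + 1) ≤ lam k := by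
    intro k
    have h := (hstep k).2 (x k) (hxT k)
    rw [hlam (k + 1), div_le_iff₀ (hnpos (k + 1))]
    have h1 := hIk k
    linarith
  have hanti : Antitone lam := antitone_nat_of_succ_le hmono
  have hbddr : BddBelow (Set.range lam) := by
    refine ⟨m, ?_⟩
    rintro a ⟨k, rfl⟩
    exact hmle k
  have hL : Filter.Tendsto lam Filter.atTop (nhds (⨅ k, lam k)) :=
    tendsto_atTop_ciInf hanti hbddr
  set L := ⨅ k, lam k with hLdef
  have hmL : m ≤ L := le_ciInf hmle
  obtain ⟨z, hzT, hC⟩ := hTc.exists_isMaxOn ⟨x 0, hxT 0⟩ (norm1d_continuous G).continuousOn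
  set C := norm1d G z with hCdef
  have key : ∀ y ∈ piSet G, ∀ k,
      lam k + (lam (k + 1) - lam k) * norm1d G (x (k + 1)) ≤ Ifun G y := by
    intro y hy k
    have h := (hstep k).2 y (hπT hy)
    rw [hy.1] at h
    have h2 := hIk (k + 1)
    have hexp : (lam (k + 1) - lam k) * norm1d G (x (k + 1)) =
        lam (k + 1) * norm1d G (x (k + 1)) - lam k * norm1d G (x (k + 1)) := by ring
    rw [hexp]
    linarith
  have hdiff0 : Filter.Tendsto (fun k => (lam (k + 1) - lam k) * norm1d G (x (k + 1)))
      Filter.atTop (nhds 0) := by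
    have h1 : Filter.Tendsto (fun k => lam (k + 1) - lam k) Filter.atTop (nhds 0) := by
      have := (hL.comp (Filter.tendsto_add_atTop_nat 1)).sub hL
      simpa using this
    apply squeeze_zero_norm (a := fun k => C * |lam (k + 1) - lam k|)
    · intro k
      rw [Real.norm_eq_abs, abs_mul, abs_of_nonneg (norm1d_nonneg G _)]
      calc |lam (k + 1) - lam k| * norm1d G (x (k + 1))
          ≤ |lam (k + 1) - lam k| * C :=
            mul_le_mul_of_nonneg_left (hC (hxT (k + 1))) (abs_nonneg _)
        _ = C * |lam (k + 1) - lam k| := mul_comm _ _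
    · simpa using tendsto_const_nhds.mul h1.abs
  have hLm : L ≤ m := by
    apply le_csInf hne
    rintro b ⟨y, hy, rfl⟩
    have htend : Filter.Tendsto
        (fun k => lam k + (lam (k + 1) - lam k) * norm1d G (x (k + 1)))
        Filter.atTop (nhds (L + 0)) := hL.add hdiff0
    have := le_of_tendsto htend (Filter.Eventually.of_forall (key y hy))
    simpa using this
  have hLM : L = m := le_antisymm hLm hmL
  exact ⟨hanti, hLM ▸ hL⟩
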